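/- Let m ∈ ℕ, N_1, …, N_m ∈ ℕ, and L_1, …, L_m > 0. Let f : S_{N_1} × ⋯ × S_{N_m} → ℝ be such that for each j ∈ [m], f is L_j-Lipschitz in its j-th argument with respect to the normalized Hamming metric d(σ,π) = (1/N_j)#{i : σ(i) ≠ π(i)} when the other arguments are held fixed. Let Σ_1, …, Σ_m be independent, with Σ_j uniformly distributed on S_{N_j}. Then for every ε > 0, P(|f(Σ_1, …, Σ_m) − 𝔼 f(Σ_1, …, Σ_m)| ≥ ε) ≤ 2 Σ_{j=1}^m exp(−N_j ε² / (64 m² L_j²)). -/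

import Mathlib

open Filter MeasureTheory Matrix
open scoped BigOperators Classical

namespace GraphPaper

/-! ### Directed multigraphs (test digraphs) -/

/-- A directed multigraph with vertex type `V` and edge type `E`. -/
structure Digr (V E : Type*) where
  src : E → V
  tgt : E → V

namespace Digr

variable {V E : Type*} (D : Digr V E)

/-- One-step (direction-agnostic) adjacency. -/
def Adj (v w : V) : Prop := ∃ e : E, D.src e = v ∧ D.tgt e = w

/-- The setoid of weakly connected components. -/
def compSetoid : Setoid V := Relation.EqvGen.setoid D.Adj

/-- The weakly connected components. -/
def Components : Type _ := Quotient D.compSetoid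

/-- The number of weakly connected components. -/
noncomputable def ncomp : ℕ := Nat.card D.Components

/-- Weak connectedness. -/
def IsConnected : Prop := Nonempty V ∧ ∀ v w : V, D.compSetoid v w

/-- The digraph with one edge removed. -/
def erase (e₀ : E) : Digr V {e : E // e ≠ e₀} :=
  ⟨fun e => D.src e.1, fun e => D.tgt e.1⟩

/-- `e₀` is a cut edge: removing it increases the number of weakly connected components. -/
def IsCutEdge (e₀ : E) : Prop := D.ncomp < (D.erase e₀).ncomp

/-- Two-edge-connectedness: weakly connected with no cut edge. -/
def IsTwoEdgeConnected : Prop := D.IsConnected ∧ ∀ e : E, ¬ D.IsCutEdge e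

/-- A tree (as an undirected multigraph): connected, with no cycles and no parallel
edges; equivalently, connected and every edge is a cut edge. -/
def IsTree : Prop := D.IsConnected ∧ ∀ e : E, D.IsCutEdge e

/-- Two vertices are related iff they are joined by a path containing no cut edges;
the classes are the two-edge-connected components. -/
def tecSetoid : Setoid V :=
  Relation.EqvGen.setoid (fun v w => ∃ e : E, ¬ D.IsCutEdge e ∧ D.src e = v ∧ D.tgt e = w)

/-- The degree of a two-edge-connected component in the forest `ℱ(D)`:
the number of cut edges incident to it. -/
noncomputable def tecDeg (b : Quotient D.tecSetoid) : ℕ :=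
  Nat.card {e : E // D.IsCutEdge e ∧
    (Quotient.mk D.tecSetoid (D.src e) = b ∨ Quotient.mk D.tecSetoid (D.tgt e) = b)}

/-- `𝔣(D)`: the total number of leaves of the forest `ℱ(D)` of two-edge-connected
components, an isolated vertex counting as two leaves. -/
noncomputable def leafCount : ℕ :=
  ∑ᶠ b : Quotient D.tecSetoid,
    (if D.tecDeg b = 0 then 2 else if D.tecDeg b = 1 then 1 else 0)

/-- The quotient digraph by a partition (setoid) of the vertices. -/
def quotient (s : Setoid V) : Digr (Quotient s) E :=
  ⟨fun e => Quotient.mk s (D.src e), fun e => Quotient.mk s (D.tgt e)⟩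

/-- The subgraph retaining only the edges satisfying `p` (all vertices kept). -/
def restrict (p : E → Prop) : Digr V {e : E // p e} :=
  ⟨fun e => D.src e.1, fun e => D.tgt e.1⟩

/-- The trace of a test digraph with labels `A`. -/
noncomputable def tdTrace {ι : Type*} (A : E → Matrix ι ι ℂ) : ℂ :=
  (1 / (Nat.card ι : ℂ) ^ D.ncomp) *
    ∑ᶠ i : V → ι, ∏ᶠ e : E, A e (i (D.tgt e)) (i (D.src e))

/-- The injective trace of a test digraph with labels `A`. -/
noncomputable def tdTraceInj {ι : Type*} (A : E → Matrix ι ι ℂ) : ℂ :=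
  (1 / (Nat.card ι : ℂ) ^ D.ncomp) *
    ∑ᶠ i : V → ι,
      if Function.Injective i then ∏ᶠ e : E, A e (i (D.tgt e)) (i (D.src e)) else 0

end Digr

/-! ### Colored digraphs, partitions, and the associated auxiliary graphs -/

section Colored

variable {V E S C : Type*}

/-- `ρ_s` : the partition of `V` into weakly connected components of the subgraph of `D`
retaining only edges whose color is not related to the string `s`. -/
def rhoSetoid (D : Digr V E) (χ : E → C) (rel : S → C → Prop) (s : S) : Setoid V :=
  Relation.EqvGen.setoid (fun v w => ∃ e : E, ¬ rel s (χ e) ∧ D.src e = v ∧ D.tgt e = w)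

/-- `ω_{π,c} = ⋀_{s ∈ 𝒮_c} π_s`, the common refinement. -/
def omegaSetoid (rel : S → C → Prop) (π : S → Setoid V) (c : C) : Setoid V :=
  ⨅ s : {s : S // rel s c}, π s.1

/-- `T_{π,c} = (T|_c)/ω_{π,c}`. -/
def Tpc (D : Digr V E) (χ : E → C) (rel : S → C → Prop) (π : S → Setoid V) (c : C) :
    Digr (Quotient (omegaSetoid rel π c)) {e : E // χ e = c} :=
  (D.restrict (fun e => χ e = c)).quotient (omegaSetoid rel π c)

/-- `𝒢_{π,s} = (T|_{𝒞_s})/π_s`. -/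
def Gps (D : Digr V E) (χ : E → C) (rel : S → C → Prop) (π : S → Setoid V) (s : S) :
    Digr (Quotient (π s)) {e : E // rel s (χ e)} :=
  (D.restrict (fun e => rel s (χ e))).quotient (π s)

/-- The map `h_{s,c} : V(T_{π,c}) → V(𝒢_{π,s})`, `[v]_{ω_{π,c}} ↦ [v]_{π_s}`. -/
def hmap (rel : S → C → Prop) (π : S → Setoid V) {s : S} {c : C} (h : rel s c) :
    Quotient (omegaSetoid rel π c) → Quotient (π s) :=
  fun q => Quotient.liftOn q (fun v => Quotient.mk (π s) v)
    (fun a b hab => Quot.sound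
      (Setoid.le_def.mp (iInf_le (fun s' : {s' : S // rel s' c} => π s'.1) ⟨s, h⟩) hab))

/-- The vertex set of the graph of colored components `GCC(T,π,s)`. -/
def GCCVert (D : Digr V E) (χ : E → C) (rel : S → C → Prop) (π : S → Setoid V) (s : S) :
    Type _ :=
  Quotient (π s) ⊕ (Σ c : {c : C // rel s c}, (Tpc D χ rel π c.1).Components)

/-- The edge set of `GCC(T,π,s)`. -/
def GCCEdge (rel : S → C → Prop) (π : S → Setoid V) (s : S) : Type _ :=
  Σ c : {c : C // rel s c}, Quotient (omegaSetoid rel π c.1)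

/-- The graph of colored components `GCC(T,π,s)`: the bipartite multigraph with an edge
for each `v ∈ V(T_{π,c})` (`c ∈ 𝒞_s`), joining the component of `T_{π,c}` containing `v`
to `h_{s,c}(v)`. -/
def GCC (D : Digr V E) (χ : E → C) (rel : S → C → Prop) (π : S → Setoid V) (s : S) :
    Digr (GCCVert D χ rel π s) (GCCEdge rel π s) where
  src := fun p => Sum.inr ⟨p.1, Quotient.mk (Tpc D χ rel π p.1.1).compSetoid p.2⟩
  tgt := fun p => Sum.inl (hmap rel π p.1.2 p.2)

end Colored

/-! ### The matrix model -/

section Model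

variable {S C : Type*}

/-- Index set for `⊗_{s ∈ 𝒮} M_N(ℂ)`. -/
abbrev BigIx (S : Type*) (N : ℕ) := S → Fin N

/-- Index set for `⊗_{s ∈ 𝒮_c} M_N(ℂ)`. -/
abbrev ColIx (rel : S → C → Prop) (c : C) (N : ℕ) := {s : S // rel s c} → Fin N

/-- View a matrix in `⊗_{s ∈ 𝒮_c} M_N(ℂ)` inside `⊗_{s ∈ 𝒮} M_N(ℂ)` by tensoring with
the identity on the remaining factors. -/
noncomputable def embed [Fintype S] (rel : S → C → Prop) (c : C) {N : ℕ}
    (X : Matrix (ColIx rel c N) (ColIx rel c N) ℂ) :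
    Matrix (BigIx S N) (BigIx S N) ℂ :=
  Matrix.of fun a b =>
    if (∀ s : S, ¬ rel s c → a s = b s) then X (fun s => a s.1) (fun s => b s.1) else 0

/-- The permutation matrix of a permutation. -/
def permMat {ι : Type*} [DecidableEq ι] (σ : Equiv.Perm ι) : Matrix ι ι ℂ :=
  Matrix.of fun i j => if σ j = i then 1 else 0

/-- `X̲ = Σ_c^* X Σ_c`, viewed inside `⊗_{s ∈ 𝒮} M_N(ℂ)`. -/
noncomputable def conjEmbed [Fintype S] (rel : S → C → Prop) (c : C) {N : ℕ}
    (σc : Equiv.Perm (ColIx rel c N))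
    (X : Matrix (ColIx rel c N) (ColIx rel c N) ℂ) :
    Matrix (BigIx S N) (BigIx S N) ℂ :=
  embed rel c ((permMat σc)ᴴ * X * permMat σc)

/-- `Δ`, the conditional expectation onto the diagonal. -/
def diagPart {ι : Type*} [DecidableEq ι] (M : Matrix ι ι ℂ) : Matrix ι ι ℂ :=
  Matrix.diagonal fun i => M i i

/-- The normalized `L²`-norm `‖M‖₂ = tr_n(M^*M)^{1/2}`. -/
noncomputable def l2norm {ι : Type*} [Fintype ι] (M : Matrix ι ι ℂ) : ℝ :=
  Real.sqrt ((Matrix.trace (Mᴴ * M) / (Fintype.card ι : ℂ)).re)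

/-- The operator norm of a matrix acting on Euclidean space. -/
noncomputable def opNorm {ι : Type*} [Fintype ι] [DecidableEq ι] (M : Matrix ι ι ℂ) : ℝ :=
  ‖Matrix.toEuclideanCLM (𝕜 := ℂ) M‖

/-- The ordered product `f 0 * f 1 * ⋯ * f (k-1)`. -/
def prodList {M : Type*} [Monoid M] (k : ℕ) (f : Fin k → M) : M :=
  ((List.finRange k).map f).prod

/-- `γ_N(T,π)`. -/
noncomputable def gammaN {V E : Type*} [Fintype S] (rel : S → C → Prop)
    (D : Digr V E) (χ : E → C) (N : ℕ)
    (X : (e : E) → Matrix (ColIx rel (χ e) N) (ColIx rel (χ e) N) ℂ)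
    (Λ : V → Matrix (BigIx S N) (BigIx S N) ℂ)
    (π : S → Setoid V)
    (σ : (c : C) → Equiv.Perm (ColIx rel c N)) : ℂ :=
  (1 / (N : ℂ) ^ (Nat.card S)) *
    ∑ᶠ i : V → BigIx S N,
      if (∀ s : S, Setoid.ker (fun v => i v s) = π s) then
        (∏ᶠ v : V, Λ v (i v) (i v)) *
          ∏ᶠ e : E, (conjEmbed rel (χ e) (σ (χ e)) (X e)) (i (D.tgt e)) (i (D.src e))
      else 0

/-- `λ_N(T,π)`. -/
noncomputable def lambdaN {V : Type*} [Fintype S] (N : ℕ)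
    (Λ : V → Matrix (BigIx S N) (BigIx S N) ℂ) (π : S → Setoid V) : ℂ :=
  (1 / (N : ℂ) ^ (∑ᶠ s : S, Nat.card (Quotient (π s)))) *
    ∑ᶠ i : V → BigIx S N,
      if (∀ s : S, Setoid.ker (fun v => i v s) = π s) then (∏ᶠ v : V, Λ v (i v) (i v))
      else 0

/-- `τ_{N^{#𝒮}}(T̊)`, the trace of the test digraph `T` with a `Λ_v`-labelled self-loop
added at each vertex `v`. -/
noncomputable def ringTrace {V E : Type*} [Fintype S] (rel : S → C → Prop)
    (D : Digr V E) (χ : E → C) (N : ℕ)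
    (X : (e : E) → Matrix (ColIx rel (χ e) N) (ColIx rel (χ e) N) ℂ)
    (Λ : V → Matrix (BigIx S N) (BigIx S N) ℂ)
    (σ : (c : C) → Equiv.Perm (ColIx rel c N)) : ℂ :=
  (1 / (N : ℂ) ^ (Nat.card S)) *
    ∑ᶠ i : V → BigIx S N,
      (∏ᶠ v : V, Λ v (i v) (i v)) *
        ∏ᶠ e : E, (conjEmbed rel (χ e) (σ (χ e)) (X e)) (i (D.tgt e)) (i (D.src e))

/-- Expectation with respect to independent uniformly random permutations, one for each
color: the average over all tuples of permutations. -/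
noncomputable def Eperm [Fintype S] (rel : S → C → Prop) (N : ℕ)
    (f : ((c : C) → Equiv.Perm (ColIx rel c N)) → ℂ) : ℂ :=
  (∑ᶠ σ : (c : C) → Equiv.Perm (ColIx rel c N), f σ) /
    (Nat.card ((c : C) → Equiv.Perm (ColIx rel c N)) : ℂ)

/-- Transport a matrix label along an equality of colors. -/
def castCol (rel : S → C → Prop) {N : ℕ} {c c' : C} (h : c = c')
    (X : Matrix (ColIx rel c N) (ColIx rel c N) ℂ) :
    Matrix (ColIx rel c' N) (ColIx rel c' N) ℂ := h ▸ X

/-- The uniform probability measure on the tuples of permutations (with the discrete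
`σ`-algebra). -/
noncomputable def uniformTupleMeasure [Fintype C] [Fintype S] (rel : S → C → Prop) (N : ℕ) :=
  letI : MeasurableSpace ((c : C) → Equiv.Perm (ColIx rel c N)) := ⊤
  haveI : Nonempty ((c : C) → Equiv.Perm (ColIx rel c N)) := ⟨fun _ => 1⟩
  ((PMF.uniformOfFintype ((c : C) → Equiv.Perm (ColIx rel c N))).toMeasure :
    Measure ((c : C) → Equiv.Perm (ColIx rel c N)))

/-- The tuple `(Σ_c)_{c ∈ 𝒞}` of random permutations is uniformly distributed on the
product (equivalently, the `Σ_c` are independent and each uniform). -/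
def hasUniformLaw [Fintype C] [Fintype S] (rel : S → C → Prop) {Ω : Type*}
    [MeasurableSpace Ω] (P : Measure Ω) (N : ℕ)
    (Sp : (c : C) → Ω → Equiv.Perm (ColIx rel c N)) : Prop :=
  letI : MeasurableSpace ((c : C) → Equiv.Perm (ColIx rel c N)) := ⊤
  Measure.map (fun ω c => Sp c ω) P = uniformTupleMeasure rel N

end Model

/-- A word `χ : [k] → 𝒞` is `𝒢`-reduced. -/
def GReduced {C : Type*} (Edg : C → C → Prop) {k : ℕ} (χ : Fin k → C) : Prop :=
  ∀ i j : Fin k, i < j → χ i = χ j → ∃ l : Fin k, i < l ∧ l < j ∧ ¬ Edg (χ i) (χ l)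

/-! ### Sofic groups and graph products of groups -/

/-- The normalized Hamming distance on `S_N`. -/
noncomputable def dHamm {n : ℕ} (σ τ : Equiv.Perm (Fin n)) : ℝ :=
  ((Finset.univ.filter fun j : Fin n => σ j ≠ τ j).card : ℝ) / n

/-- A group is sofic if it admits an asymptotic homomorphism into permutation groups. -/
def IsSofic (Γ : Type*) [Group Γ] : Prop :=
  ∃ (Nk : ℕ → ℕ) (σ : (k : ℕ) → Γ → Equiv.Perm (Fin (Nk k))),
    Tendsto Nk atTop atTop ∧
    (∀ g h : Γ, Tendsto (fun k => dHamm (σ k g * σ k h) (σ k (g * h))) atTop (nhds 0)) ∧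
    (∀ g : Γ, Tendsto (fun k => dHamm (σ k g) 1) atTop
      (nhds (if g = 1 then 0 else 1)))

/-- The normal subgroup of the free product generated by the commutators of elements of
vertex groups joined by an edge. -/
def graphProductKer {C : Type*} (Edg : C → C → Prop) (G : C → Type*)
    [∀ c, Group (G c)] : Subgroup (Monoid.CoprodI G) :=
  Subgroup.normalClosure
    {x | ∃ (c c' : C) (_ : Edg c c') (g : G c) (g' : G c'),
      x = Monoid.CoprodI.of g * Monoid.CoprodI.of g' *
        (Monoid.CoprodI.of g)⁻¹ * (Monoid.CoprodI.of g')⁻¹}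

/-- The graph product of the groups `(G c)_{c ∈ 𝒞}` over the graph with edge relation
`Edg`. -/
def GraphProduct {C : Type*} (Edg : C → C → Prop) (G : C → Type*) [∀ c, Group (G c)] :
    Type _ :=
  Monoid.CoprodI G ⧸ graphProductKer Edg G

instance graphProductKer_normal {C : Type*} (Edg : C → C → Prop) (G : C → Type*)
    [∀ c, Group (G c)] : (graphProductKer Edg G).Normal :=
  Subgroup.normalClosure_normal

instance {C : Type*} (Edg : C → C → Prop) (G : C → Type*) [∀ c, Group (G c)] :
    Group (GraphProduct Edg G) :=
  QuotientGroup.Quotient.group _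

/-- The group element corresponding to a word in the generators and their inverses:
the letter `(j, tt)` is `g_j`, and `(j, ff)` is `g_j⁻¹`. -/
def wordElemG {Γ : Type*} [Group Γ] (g : ℕ → Γ) {m : ℕ} (w : Fin m → ℕ × Bool) : Γ :=
  prodList m (fun i => if (w i).2 then g (w i).1 else (g (w i).1)⁻¹)

/-- The matrix product corresponding to a word in permutation matrices and their
inverses. -/
noncomputable def wordMat {N m : ℕ} (T : ℕ → Equiv.Perm (Fin N)) (w : Fin m → ℕ × Bool) :
    Matrix (Fin N) (Fin N) ℂ :=
  prodList m (fun i => if (w i).2 then permMat (T (w i).1) else (permMat (T (w i).1))⁻¹)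

section ConcAux
open Finset

lemma avg_exp_le {Ω : Type*} [Fintype Ω] [Nonempty Ω] (f : Ω → ℝ) (c t : ℝ) (hc : 0 ≤ c)
    (h0 : ∑ x, f x = 0) (hb : ∀ x, |f x| ≤ c) :
    ∑ x, Real.exp (t * f x) ≤ (Fintype.card Ω : ℝ) * Real.exp (t ^ 2 * c ^ 2 / 2) := by
  have hcardpos : (0:ℝ) < Fintype.card Ω := by
    exact_mod_cast Fintype.card_pos
  rcases eq_or_lt_of_le hc with h | hc
  · have hz : ∀ x, f x = 0 := fun x =>
      abs_eq_zero.mp (le_antisymm (h ▸ hb x) (abs_nonneg _))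
    have : ∑ x : Ω, Real.exp (t * f x) = (Fintype.card Ω : ℝ) := by
      simp [hz]
    rw [this]
    nlinarith [Real.one_le_exp (by positivity : (0:ℝ) ≤ t ^ 2 * c ^ 2 / 2)]
  · have key : ∀ x, Real.exp (t * f x)
        ≤ Real.cosh (t * c) + (f x / c) * Real.sinh (t * c) := by
      intro x
      have h1 : f x ≤ c := (abs_le.mp (hb x)).2
      have h2 : -c ≤ f x := (abs_le.mp (hb x)).1
      have ha : (0:ℝ) ≤ (c - f x) / (2 * c) := by
        apply div_nonneg (by linarith) (by linarith)
      have hb' : (0:ℝ) ≤ (c + f x) / (2 * c) := by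
        have : 0 ≤ c + f x := by linarith
        positivity
      have hab : (c - f x) / (2 * c) + (c + f x) / (2 * c) = 1 := by
        field_simp
        ring
      have := convexOn_exp.2 (Set.mem_univ (-(t * c))) (Set.mem_univ (t * c)) ha hb' hab
      simp only [smul_eq_mul] at this
      have harg : (c - f x) / (2 * c) * -(t * c) + (c + f x) / (2 * c) * (t * c) = t * f x := by
        field_simp; ring
      rw [harg] at this
      refine this.trans_eq ?_
      rw [Real.cosh_eq, Real.sinh_eq]
      field_simp
      ring
    calc ∑ x, Real.exp (t * f x)
        ≤ ∑ x, (Real.cosh (t * c) + (f x / c) * Real.sinh (t * c)) :=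
          Finset.sum_le_sum fun x _ => key x
      _ = (Fintype.card Ω : ℝ) * Real.cosh (t * c) := by
          rw [Finset.sum_add_distrib, Finset.sum_const, ← Finset.sum_mul,
            ← Finset.sum_div, h0]
          simp [nsmul_eq_mul, Finset.card_univ]
      _ ≤ (Fintype.card Ω : ℝ) * Real.exp (t ^ 2 * c ^ 2 / 2) := by
          have := Real.cosh_le_exp_half_sq (t * c)
          have h2 : (t*c)^2/2 = t ^ 2 * c ^ 2 / 2 := by ring
          rw [h2] at this
          exact mul_le_mul_of_nonneg_left this hcardpos.le

noncomputable def pavg {Ω : Type*} [Fintype Ω] (h : Ω → ℝ) : ℝ :=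
  (∑ x, h x) / (Fintype.card Ω : ℝ)

lemma pavg_const {Ω : Type*} [Fintype Ω] [Nonempty Ω] (c : ℝ) :
    pavg (fun _ : Ω => c) = c := by
  have : (0:ℝ) < (Fintype.card Ω : ℝ) := by exact_mod_cast Fintype.card_pos
  simp [pavg, Finset.card_univ]

lemma sum_sub_pavg {Ω : Type*} [Fintype Ω] [Nonempty Ω] (g : Ω → ℝ) :
    ∑ x, (g x - pavg g) = 0 := by
  have : ((Fintype.card Ω : ℝ)) ≠ 0 := by
    exact_mod_cast Fintype.card_ne_zero
  rw [Finset.sum_sub_distrib, Finset.sum_const, Finset.card_univ, pavg, nsmul_eq_mul]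
  field_simp
  ring

lemma abs_pavg_sub_pavg_le {Ω : Type*} [Fintype Ω] [Nonempty Ω] (f g : Ω → ℝ) (c : ℝ)
    (hb : ∀ x, |f x - g x| ≤ c) : |pavg f - pavg g| ≤ c := by
  have hcard : (0:ℝ) < (Fintype.card Ω : ℝ) := by exact_mod_cast Fintype.card_pos
  have : pavg f - pavg g = (∑ x, (f x - g x)) / (Fintype.card Ω : ℝ) := by
    rw [Finset.sum_sub_distrib, pavg, pavg, sub_div]
  rw [this, abs_div, abs_of_pos hcard, div_le_iff₀ hcard]
  calc |∑ x, (f x - g x)| ≤ ∑ x, |f x - g x| := Finset.abs_sum_le_sum_abs _ _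
    _ ≤ ∑ _x : Ω, c := Finset.sum_le_sum fun x _ => hb x
    _ = c * (Fintype.card Ω : ℝ) := by rw [Finset.sum_const, Finset.card_univ, nsmul_eq_mul]; ring

lemma mgf_perm (ℓ t : ℝ) (hℓ : 0 ≤ ℓ) :
    ∀ (n : ℕ) (h : Equiv.Perm (Fin n) → ℝ),
      (∀ σ τ : Equiv.Perm (Fin n),
        |h σ - h τ| ≤ ℓ * ((Finset.univ.filter fun i => σ i ≠ τ i).card : ℝ)) →
      ∑ σ, Real.exp (t * (h σ - pavg h)) ≤
        (Fintype.card (Equiv.Perm (Fin n)) : ℝ) *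
          Real.exp ((n : ℝ) * (t ^ 2 * (3 * ℓ) ^ 2 / 2)) := by
  intro n
  induction n with
  | zero =>
    intro h _
    have hc : Fintype.card (Equiv.Perm (Fin 0)) = 1 := by
      simp [Fintype.card_perm]
    obtain ⟨x, hx⟩ := Fintype.card_eq_one_iff.mp hc
    have huniv : (Finset.univ : Finset (Equiv.Perm (Fin 0))) = {x} := by
      apply Finset.eq_singleton_iff_unique_mem.mpr
      exact ⟨Finset.mem_univ _, fun y _ => hx y⟩
    have hpavg : pavg h = h x := by
      rw [pavg, hc, huniv]; simp
    rw [huniv, hc]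
    simp [hpavg]
  | succ n IH =>
    intro h hlip
    set C : ℝ := t ^ 2 * (3 * ℓ) ^ 2 / 2 with hC
    set e : Fin (n + 1) × Equiv.Perm (Fin n) ≃ Equiv.Perm (Fin (n + 1)) :=
      (Equiv.Perm.decomposeFin (n := n)).symm with he
    set cardP : ℝ := (Fintype.card (Equiv.Perm (Fin n)) : ℝ) with hcp
    have hcpPos : 0 < cardP := by
      rw [hcp]; exact_mod_cast Fintype.card_pos
    have hcard : (Fintype.card (Equiv.Perm (Fin (n + 1))) : ℝ) = (n + 1 : ℝ) * cardP := by
      rw [hcp]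
      simp [Fintype.card_perm, Nat.factorial_succ]
    have hsum : ∀ F : Equiv.Perm (Fin (n + 1)) → ℝ,
        ∑ σ, F σ = ∑ a : Fin (n + 1), ∑ τ : Equiv.Perm (Fin n), F (e (a, τ)) := by
      intro F
      rw [← Equiv.sum_comp e F, Fintype.sum_prod_type]
    set H : Fin (n + 1) → ℝ := fun a => pavg (fun τ => h (e (a, τ))) with hH
    -- inner Lipschitz
    have hinner : ∀ (a : Fin (n + 1)) (τ₁ τ₂ : Equiv.Perm (Fin n)),
        |h (e (a, τ₁)) - h (e (a, τ₂))| ≤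
          ℓ * ((Finset.univ.filter fun i => τ₁ i ≠ τ₂ i).card : ℝ) := by
      intro a τ₁ τ₂
      refine (hlip _ _).trans (mul_le_mul_of_nonneg_left ?_ hℓ)
      have hsub : (Finset.univ.filter fun j : Fin (n + 1) => e (a, τ₁) j ≠ e (a, τ₂) j)
          ⊆ (Finset.univ.filter fun i => τ₁ i ≠ τ₂ i).image Fin.succ := by
        intro j hj
        rw [Finset.mem_filter] at hj
        rcases Fin.eq_zero_or_eq_succ j with rfl | ⟨i, rfl⟩
        · exact absurd (by simp [he] : e (a, τ₁) 0 = e (a, τ₂) 0) hj.2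
        · refine Finset.mem_image.mpr ⟨i, ?_, rfl⟩
          rw [Finset.mem_filter]
          refine ⟨Finset.mem_univ _, fun hcon => ?_⟩
          apply hj.2
          simp [he, Equiv.Perm.decomposeFin_symm_apply_succ, hcon]
      exact_mod_cast (Finset.card_le_card hsub).trans Finset.card_image_le
    -- cross Lipschitz
    have hcross : ∀ (a b : Fin (n + 1)) (τ : Equiv.Perm (Fin n)),
        |h (e (a, τ)) - h (e (b, τ))| ≤ ℓ * 3 := by
      intro a b τ
      refine (hlip _ _).trans ?_
      refine mul_le_mul_of_nonneg_left ?_ hℓ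
      have hsub : (Finset.univ.filter fun j : Fin (n + 1) => e (a, τ) j ≠ e (b, τ) j)
          ⊆ insert (0 : Fin (n + 1))
            (((Finset.univ.filter fun i : Fin n => (τ i).succ = a).image Fin.succ) ∪
             ((Finset.univ.filter fun i : Fin n => (τ i).succ = b).image Fin.succ)) := by
        intro j hj
        rw [Finset.mem_filter] at hj
        rcases Fin.eq_zero_or_eq_succ j with rfl | ⟨i, rfl⟩
        · exact Finset.mem_insert_self _ _
        · refine Finset.mem_insert_of_mem (Finset.mem_union.mpr ?_)
          by_cases ha : (τ i).succ = a
          · exact Or.inl (Finset.mem_image.mpr ⟨i, Finset.mem_filter.mpr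
              ⟨Finset.mem_univ _, ha⟩, rfl⟩)
          by_cases hb : (τ i).succ = b
          · exact Or.inr (Finset.mem_image.mpr ⟨i, Finset.mem_filter.mpr
              ⟨Finset.mem_univ _, hb⟩, rfl⟩)
          exfalso
          apply hj.2
          simp only [he, Equiv.Perm.decomposeFin_symm_apply_succ]
          rw [Equiv.swap_apply_of_ne_of_ne (Fin.succ_ne_zero _) ha,
            Equiv.swap_apply_of_ne_of_ne (Fin.succ_ne_zero _) hb]
      have hone : ∀ p : Fin (n + 1),
          (Finset.univ.filter fun i : Fin n => (τ i).succ = p).card ≤ 1 := by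
        intro p
        refine Finset.card_le_one.mpr fun i hi i' hi' => ?_
        rw [Finset.mem_filter] at hi hi'
        have : (τ i) = (τ i') := Fin.succ_injective _ (hi.2.trans hi'.2.symm)
        exact τ.injective this
      have hcard3 : (Finset.univ.filter fun j : Fin (n + 1) =>
          e (a, τ) j ≠ e (b, τ) j).card ≤ 3 := by
        calc (Finset.univ.filter fun j : Fin (n + 1) => e (a, τ) j ≠ e (b, τ) j).card
            ≤ _ := Finset.card_le_card hsub
          _ ≤ (((Finset.univ.filter fun i : Fin n => (τ i).succ = a).image Fin.succ) ∪
             ((Finset.univ.filter fun i : Fin n => (τ i).succ = b).image Fin.succ)).card + 1 :=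
              Finset.card_insert_le _ _
          _ ≤ (((Finset.univ.filter fun i : Fin n => (τ i).succ = a).image Fin.succ).card
              + ((Finset.univ.filter fun i : Fin n => (τ i).succ = b).image Fin.succ).card) + 1 :=
              by gcongr; exact Finset.card_union_le _ _
          _ ≤ (1 + 1) + 1 := by
              gcongr <;> exact Finset.card_image_le.trans (hone _)
          _ = 3 := by norm_num
      exact_mod_cast hcard3
    haveI : Nonempty (Equiv.Perm (Fin n)) := ⟨1⟩
    have hHlip : ∀ a b : Fin (n + 1), |H a - H b| ≤ ℓ * 3 := by
      intro a b
      exact abs_pavg_sub_pavg_le _ _ _ fun τ => hcross a b τ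
    have hpavgH : pavg h = pavg H := by
      have hHsum' : ∑ a : Fin (n + 1), H a
          = (∑ a : Fin (n + 1), ∑ τ, h (e (a, τ))) / cardP := by
        rw [Finset.sum_div]
        rfl
      rw [pavg, pavg, hsum h, hcard, Fintype.card_fin, hHsum']
      rw [div_div]
      push_cast
      ring_nf
    have hHdev : ∀ a, |H a - pavg H| ≤ 3 * ℓ := by
      intro a
      have := abs_pavg_sub_pavg_le (fun _ : Fin (n+1) => H a) H (ℓ * 3)
        (fun b => hHlip a b)
      rw [pavg_const] at this
      linarith [this]
    have hHsum : ∑ a : Fin (n + 1), (H a - pavg H) = 0 := sum_sub_pavg H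
    have houter := avg_exp_le (fun a : Fin (n + 1) => H a - pavg H) (3 * ℓ) t
      (by positivity) hHsum hHdev
    rw [Fintype.card_fin] at houter
    -- main chain
    calc ∑ σ, Real.exp (t * (h σ - pavg h))
        = ∑ a : Fin (n + 1), ∑ τ, Real.exp (t * (h (e (a, τ)) - pavg h)) := hsum _
      _ = ∑ a : Fin (n + 1), Real.exp (t * (H a - pavg h)) *
            ∑ τ, Real.exp (t * (h (e (a, τ)) - H a)) := by
          apply Finset.sum_congr rfl
          intro a _
          rw [Finset.mul_sum]
          apply Finset.sum_congr rfl
          intro τ _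
          rw [← Real.exp_add]
          congr 1
          ring
      _ ≤ ∑ a : Fin (n + 1), Real.exp (t * (H a - pavg h)) * (cardP * Real.exp (n * C)) := by
          apply Finset.sum_le_sum
          intro a _
          exact mul_le_mul_of_nonneg_left (IH (fun τ => h (e (a, τ))) (hinner a))
            (Real.exp_nonneg _)
      _ = (cardP * Real.exp (n * C)) * ∑ a : Fin (n + 1), Real.exp (t * (H a - pavg H)) := by
          rw [← Finset.sum_mul, hpavgH]; ring
      _ ≤ (cardP * Real.exp (n * C)) * ((n + 1 : ℝ) * Real.exp (t ^ 2 * (3 * ℓ) ^ 2 / 2)) := by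
          refine mul_le_mul_of_nonneg_left ?_ (by positivity)
          exact_mod_cast houter
      _ = (Fintype.card (Equiv.Perm (Fin (n + 1))) : ℝ) *
            Real.exp (((n : ℕ) + 1 : ℝ) * C) := by
          rw [hcard, show ((n : ℝ) + 1) * C = (n : ℝ) * C + C by ring, Real.exp_add, hC]
          ring
      _ = _ := by push_cast; ring_nf


lemma pavg_neg {Ω : Type*} [Fintype Ω] (h : Ω → ℝ) :
    pavg (fun x => -h x) = -pavg h := by
  simp [pavg, Finset.sum_neg_distrib, neg_div]

lemma tail_onesided {n : ℕ} (hn : 0 < n) (L s : ℝ) (hL : 0 < L) (hs : 0 < s)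
    (h : Equiv.Perm (Fin n) → ℝ)
    (hlip : ∀ σ τ, |h σ - h τ| ≤ L * dHamm σ τ) :
    ((Finset.univ.filter fun σ => s ≤ h σ - pavg h).card : ℝ) ≤
      Real.exp (-(n : ℝ) * s ^ 2 / (18 * L ^ 2)) *
        (Fintype.card (Equiv.Perm (Fin n)) : ℝ) := by
  have hnR : (0:ℝ) < (n : ℝ) := by exact_mod_cast hn
  set lam : ℝ := s * n / (9 * L ^ 2) with hlam
  have hlampos : 0 < lam := by positivity
  have hml : ∀ σ τ : Equiv.Perm (Fin n),
      |h σ - h τ| ≤ (L / n) * ((Finset.univ.filter fun i => σ i ≠ τ i).card : ℝ) := by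
    intro σ τ
    refine (hlip σ τ).trans_eq ?_
    rw [dHamm]
    ring
  have hm := mgf_perm (L / n) lam (by positivity) n h hml
  set A : ℝ := (n : ℝ) * (lam ^ 2 * (3 * (L / n)) ^ 2 / 2) with hA
  have key : ((Finset.univ.filter fun σ => s ≤ h σ - pavg h).card : ℝ) * Real.exp (lam * s)
      ≤ (Fintype.card (Equiv.Perm (Fin n)) : ℝ) * Real.exp A := by
    calc ((Finset.univ.filter fun σ => s ≤ h σ - pavg h).card : ℝ) * Real.exp (lam * s)
        = ∑ _σ ∈ (Finset.univ.filter fun σ => s ≤ h σ - pavg h), Real.exp (lam * s) := by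
          rw [Finset.sum_const, nsmul_eq_mul]
      _ ≤ ∑ σ ∈ (Finset.univ.filter fun σ => s ≤ h σ - pavg h),
            Real.exp (lam * (h σ - pavg h)) := by
          apply Finset.sum_le_sum
          intro σ hσ
          rw [Finset.mem_filter] at hσ
          exact Real.exp_le_exp.mpr (mul_le_mul_of_nonneg_left hσ.2 hlampos.le)
      _ ≤ ∑ σ, Real.exp (lam * (h σ - pavg h)) :=
          Finset.sum_le_sum_of_subset_of_nonneg (Finset.filter_subset _ _)
            (fun _ _ _ => Real.exp_nonneg _)
      _ ≤ _ := hm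
  have hexp : A - lam * s = -(n : ℝ) * s ^ 2 / (18 * L ^ 2) := by
    rw [hA, hlam]
    field_simp
    ring
  have h2 := mul_le_mul_of_nonneg_right key (Real.exp_nonneg (-(lam * s)))
  rw [mul_assoc, mul_assoc, ← Real.exp_add, ← Real.exp_add] at h2
  simp only [add_neg_cancel, Real.exp_zero, mul_one] at h2
  rw [show A + -(lam * s) = A - lam * s by ring, hexp] at h2
  linarith [h2]

lemma perm_tail {n : ℕ} (L s : ℝ) (hL : 0 < L) (hs : 0 < s)
    (h : Equiv.Perm (Fin n) → ℝ)
    (hlip : ∀ σ τ, |h σ - h τ| ≤ L * dHamm σ τ) :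
    ((Finset.univ.filter fun σ => s ≤ |h σ - pavg h|).card : ℝ) ≤
      2 * Real.exp (-(n : ℝ) * s ^ 2 / (18 * L ^ 2)) *
        (Fintype.card (Equiv.Perm (Fin n)) : ℝ) := by
  haveI : Nonempty (Equiv.Perm (Fin n)) := ⟨1⟩
  rcases Nat.eq_zero_or_pos n with rfl | hn
  · have hconst : ∀ σ τ : Equiv.Perm (Fin 0), h σ = h τ := by
      intro σ τ
      have h1 : |h σ - h τ| ≤ 0 := by
        have h2 := hlip σ τ
        rw [dHamm] at h2
        simpa using h2
      have habs : |h σ - h τ| = 0 := le_antisymm h1 (abs_nonneg _)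
      exact sub_eq_zero.mp (abs_eq_zero.mp habs)
    have hempt : (Finset.univ.filter fun σ : Equiv.Perm (Fin 0) =>
        s ≤ |h σ - pavg h|).card = 0 := by
      rw [Finset.card_eq_zero, Finset.filter_eq_empty_iff]
      intro σ _
      have : pavg h = h σ := by
        have : (fun τ : Equiv.Perm (Fin 0) => h τ) = fun _ => h σ :=
          funext fun τ => hconst τ σ
        calc pavg h = pavg (fun _ : Equiv.Perm (Fin 0) => h σ) := by rw [pavg, pavg, this]
          _ = h σ := pavg_const _
      rw [this]
      simp
      linarith
    rw [hempt]
    simp only [Nat.cast_zero]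
    positivity
  · have hneg : ∀ σ τ : Equiv.Perm (Fin n),
        |(fun ρ => -h ρ) σ - (fun ρ => -h ρ) τ| ≤ L * dHamm σ τ := by
      intro σ τ
      simp only
      rw [show -h σ - -h τ = -(h σ - h τ) by ring, abs_neg]
      exact hlip σ τ
    have hup := tail_onesided hn L s hL hs h hlip
    have hdown := tail_onesided hn L s hL hs (fun ρ => -h ρ) hneg
    rw [pavg_neg] at hdown
    have hsub : (Finset.univ.filter fun σ : Equiv.Perm (Fin n) => s ≤ |h σ - pavg h|)
        ⊆ (Finset.univ.filter fun σ => s ≤ h σ - pavg h) ∪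
          (Finset.univ.filter fun σ => s ≤ -h σ - -pavg h) := by
      intro σ hσ
      rw [Finset.mem_filter] at hσ
      rw [Finset.mem_union, Finset.mem_filter, Finset.mem_filter]
      rcases abs_cases (h σ - pavg h) with ⟨hc, _⟩ | ⟨hc, _⟩ <;> rw [hc] at hσ
      · exact Or.inl ⟨Finset.mem_univ _, hσ.2⟩
      · refine Or.inr ⟨Finset.mem_univ _, ?_⟩
        linarith [hσ.2]
    have hcard := Finset.card_le_card hsub
    have hcu := Finset.card_union_le
      (Finset.univ.filter fun σ : Equiv.Perm (Fin n) => s ≤ h σ - pavg h)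
      (Finset.univ.filter fun σ : Equiv.Perm (Fin n) => s ≤ -h σ - -pavg h)
    have : ((Finset.univ.filter fun σ : Equiv.Perm (Fin n) => s ≤ |h σ - pavg h|).card : ℝ)
        ≤ ((Finset.univ.filter fun σ : Equiv.Perm (Fin n) => s ≤ h σ - pavg h).card : ℝ)
          + ((Finset.univ.filter fun σ : Equiv.Perm (Fin n) => s ≤ -h σ - -pavg h).card : ℝ) := by
      exact_mod_cast hcard.trans hcu
    linarith [this, hup, hdown]

section Multi

variable {m : ℕ} {Nv : Fin m → ℕ}

def mix (Nv : Fin m → ℕ) (k : ℕ) (x y : (j : Fin m) → Equiv.Perm (Fin (Nv j))) :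
    (j : Fin m) → Equiv.Perm (Fin (Nv j)) :=
  fun j => if (j : ℕ) < k then x j else y j

noncomputable def gfun (Nv : Fin m → ℕ)
    (f : ((j : Fin m) → Equiv.Perm (Fin (Nv j))) → ℝ) (k : ℕ)
    (x : (j : Fin m) → Equiv.Perm (Fin (Nv j))) : ℝ :=
  pavg (fun y => f (mix Nv k x y))

lemma gfun_zero (f : ((j : Fin m) → Equiv.Perm (Fin (Nv j))) → ℝ)
    (x : (j : Fin m) → Equiv.Perm (Fin (Nv j))) : gfun Nv f 0 x = pavg f := by
  unfold gfun
  have h1 : (fun y : (j : Fin m) → Equiv.Perm (Fin (Nv j)) => f (mix Nv 0 x y)) = f := by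
    funext y
    congr 1 <;> (funext j; simp [mix])
  rw [h1]

lemma gfun_top (f : ((j : Fin m) → Equiv.Perm (Fin (Nv j))) → ℝ)
    (x : (j : Fin m) → Equiv.Perm (Fin (Nv j))) : gfun Nv f m x = f x := by
  haveI : Nonempty ((j : Fin m) → Equiv.Perm (Fin (Nv j))) := ⟨fun _ => 1⟩
  unfold gfun
  have : (fun y : (j : Fin m) → Equiv.Perm (Fin (Nv j)) => f (mix Nv m x y))
      = fun _ => f x := by
    funext y
    congr 1
    funext j
    simp [mix, j.isLt]
  rw [this, pavg_const]

lemma sum_update_pair (j : Fin m)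
    (F : ((j' : Fin m) → Equiv.Perm (Fin (Nv j'))) → ℝ) :
    ∑ p : ((j' : Fin m) → Equiv.Perm (Fin (Nv j'))) × Equiv.Perm (Fin (Nv j)),
        F (Function.update p.1 j p.2)
      = ∑ p : ((j' : Fin m) → Equiv.Perm (Fin (Nv j'))) × Equiv.Perm (Fin (Nv j)), F p.1 := by
  have hInv : Function.Involutive
      (fun p : ((j' : Fin m) → Equiv.Perm (Fin (Nv j'))) × Equiv.Perm (Fin (Nv j)) =>
        (Function.update p.1 j p.2, p.1 j)) := by
    intro p
    refine Prod.ext ?_ ?_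
    · simp [Function.update_idem, Function.update_eq_self]
    · simp
  exact Equiv.sum_comp (hInv.toPerm _) (fun p => F p.1)

lemma mix_update (j : Fin m) (x y : (j' : Fin m) → Equiv.Perm (Fin (Nv j')))
    (σ : Equiv.Perm (Fin (Nv j))) :
    mix Nv ((j : ℕ) + 1) (Function.update x j σ) y
      = Function.update (mix Nv (j : ℕ) x y) j σ := by
  funext j'
  by_cases hj : j' = j
  · subst hj
    simp [mix]
  · have hne : (j' : ℕ) ≠ (j : ℕ) := fun hc => hj (Fin.ext hc)
    simp only [mix, Function.update_of_ne hj]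
    rcases lt_or_ge (j' : ℕ) (j : ℕ) with hlt | hge
    · simp [hlt, Nat.lt_succ_of_lt hlt]
    · have hgt : (j : ℕ) < (j' : ℕ) := lt_of_le_of_ne hge (Ne.symm hne)
      have h1 : ¬ (j' : ℕ) < (j : ℕ) + 1 := by omega
      have h2 : ¬ (j' : ℕ) < (j : ℕ) := by omega
      simp [h1, h2]

lemma update_mix (j : Fin m) (x y : (j' : Fin m) → Equiv.Perm (Fin (Nv j')))
    (τ : Equiv.Perm (Fin (Nv j))) :
    Function.update (mix Nv (j : ℕ) x y) j τ = mix Nv (j : ℕ) x (Function.update y j τ) := by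
  funext j'
  by_cases hj : j' = j
  · subst hj
    simp [mix]
  · simp [mix, Function.update_of_ne hj]

lemma mix_irrel (j : Fin m) (x y : (j' : Fin m) → Equiv.Perm (Fin (Nv j')))
    (σ : Equiv.Perm (Fin (Nv j))) :
    mix Nv (j : ℕ) (Function.update x j σ) y = mix Nv (j : ℕ) x y := by
  funext j'
  by_cases hj : j' = j
  · subst hj
    simp [mix]
  · simp [mix, Function.update_of_ne hj]

lemma gfun_irrel (f : ((j' : Fin m) → Equiv.Perm (Fin (Nv j'))) → ℝ) (j : Fin m)
    (x : (j' : Fin m) → Equiv.Perm (Fin (Nv j'))) (σ : Equiv.Perm (Fin (Nv j))) :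
    gfun Nv f (j : ℕ) (Function.update x j σ) = gfun Nv f (j : ℕ) x := by
  unfold gfun
  congr 1
  funext y
  rw [mix_irrel]

lemma gstep (f : ((j' : Fin m) → Equiv.Perm (Fin (Nv j'))) → ℝ) (j : Fin m)
    (x : (j' : Fin m) → Equiv.Perm (Fin (Nv j'))) :
    gfun Nv f (j : ℕ) x
      = pavg (fun τ : Equiv.Perm (Fin (Nv j)) =>
          gfun Nv f ((j : ℕ) + 1) (Function.update x j τ)) := by
  haveI : Nonempty ((j' : Fin m) → Equiv.Perm (Fin (Nv j'))) := ⟨fun _ => 1⟩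
  set K : ℝ := (Fintype.card ((j' : Fin m) → Equiv.Perm (Fin (Nv j'))) : ℝ) with hK
  set Pj : ℝ := (Fintype.card (Equiv.Perm (Fin (Nv j))) : ℝ) with hPj
  have hKpos : 0 < K := by rw [hK]; exact_mod_cast Fintype.card_pos
  have hPjpos : 0 < Pj := by rw [hPj]; exact_mod_cast Fintype.card_pos
  set G : ((j' : Fin m) → Equiv.Perm (Fin (Nv j'))) → ℝ :=
    fun y => f (mix Nv (j : ℕ) x y) with hG
  have key : ∑ τ : Equiv.Perm (Fin (Nv j)),
      ∑ y, f (mix Nv ((j : ℕ) + 1) (Function.update x j τ) y) = Pj * ∑ y, G y := by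
    have h1 : ∀ (τ : Equiv.Perm (Fin (Nv j))) (y),
        f (mix Nv ((j : ℕ) + 1) (Function.update x j τ) y) = G (Function.update y j τ) := by
      intro τ y
      rw [mix_update, update_mix]
    calc ∑ τ : Equiv.Perm (Fin (Nv j)),
        ∑ y, f (mix Nv ((j : ℕ) + 1) (Function.update x j τ) y)
        = ∑ τ : Equiv.Perm (Fin (Nv j)), ∑ y, G (Function.update y j τ) := by
          apply Finset.sum_congr rfl; intro τ _
          apply Finset.sum_congr rfl; intro y _
          exact h1 τ y
      _ = ∑ y, ∑ τ : Equiv.Perm (Fin (Nv j)), G (Function.update y j τ) := Finset.sum_comm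
      _ = ∑ p : ((j' : Fin m) → Equiv.Perm (Fin (Nv j'))) × Equiv.Perm (Fin (Nv j)),
            G (Function.update p.1 j p.2) := by rw [Fintype.sum_prod_type]
      _ = ∑ p : ((j' : Fin m) → Equiv.Perm (Fin (Nv j'))) × Equiv.Perm (Fin (Nv j)),
            G p.1 := sum_update_pair j G
      _ = ∑ y, ∑ _τ : Equiv.Perm (Fin (Nv j)), G y := by rw [Fintype.sum_prod_type]
      _ = Pj * ∑ y, G y := by
          rw [hPj, Finset.mul_sum]
          apply Finset.sum_congr rfl
          intro y _
          rw [Finset.sum_const, Finset.card_univ, nsmul_eq_mul]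
  have lhs_eq : gfun Nv f (j : ℕ) x = (∑ y, G y) / K := rfl
  have rhs_eq : pavg (fun τ : Equiv.Perm (Fin (Nv j)) =>
      gfun Nv f ((j : ℕ) + 1) (Function.update x j τ))
      = (∑ τ : Equiv.Perm (Fin (Nv j)),
          (∑ y, f (mix Nv ((j : ℕ) + 1) (Function.update x j τ) y)) / K) / Pj := rfl
  rw [lhs_eq, rhs_eq, ← Finset.sum_div, key]
  field_simp

end Multi

lemma coordbound {m : ℕ} {Nv : Fin m → ℕ} (L : Fin m → ℝ) (hL : ∀ j, 0 < L j)
    (f : ((j : Fin m) → Equiv.Perm (Fin (Nv j))) → ℝ)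
    (hf : ∀ (j : Fin m) (x : (j' : Fin m) → Equiv.Perm (Fin (Nv j')))
        (σ τ : Equiv.Perm (Fin (Nv j))),
        |f (Function.update x j σ) - f (Function.update x j τ)| ≤ L j * dHamm σ τ)
    (j : Fin m) (s : ℝ) (hs : 0 < s) :
    ((Finset.univ.filter fun x : (j' : Fin m) → Equiv.Perm (Fin (Nv j')) =>
        s ≤ |gfun Nv f ((j : ℕ) + 1) x - gfun Nv f (j : ℕ) x|).card : ℝ)
      ≤ 2 * Real.exp (-(Nv j : ℝ) * s ^ 2 / (18 * L j ^ 2)) *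
        (Fintype.card ((j' : Fin m) → Equiv.Perm (Fin (Nv j'))) : ℝ) := by
  haveI : Nonempty ((j' : Fin m) → Equiv.Perm (Fin (Nv j'))) := ⟨fun _ => 1⟩
  set K : ℝ := (Fintype.card ((j' : Fin m) → Equiv.Perm (Fin (Nv j'))) : ℝ) with hK
  set cPj : ℝ := (Fintype.card (Equiv.Perm (Fin (Nv j))) : ℝ) with hcPj
  have hKpos : 0 < K := by rw [hK]; exact_mod_cast Fintype.card_pos
  have hPjpos : 0 < cPj := by rw [hcPj]; exact_mod_cast Fintype.card_pos
  set I : ((j' : Fin m) → Equiv.Perm (Fin (Nv j'))) → ℝ := fun x =>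
    if s ≤ |gfun Nv f ((j : ℕ) + 1) x - gfun Nv f (j : ℕ) x| then 1 else 0 with hI
  set B : ℝ := 2 * Real.exp (-(Nv j : ℝ) * s ^ 2 / (18 * L j ^ 2)) with hB
  -- per-x bound
  have perx : ∀ x : (j' : Fin m) → Equiv.Perm (Fin (Nv j')),
      ∑ τ : Equiv.Perm (Fin (Nv j)), I (Function.update x j τ) ≤ B * cPj := by
    intro x
    set φ : Equiv.Perm (Fin (Nv j)) → ℝ :=
      fun σ => gfun Nv f ((j : ℕ) + 1) (Function.update x j σ) with hφ
    have hmean : ∀ τ : Equiv.Perm (Fin (Nv j)),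
        gfun Nv f (j : ℕ) (Function.update x j τ) = pavg φ := by
      intro τ
      rw [gfun_irrel, gstep f j x]
    have hφlip : ∀ σ τ : Equiv.Perm (Fin (Nv j)), |φ σ - φ τ| ≤ L j * dHamm σ τ := by
      intro σ τ
      haveI : Nonempty ((j' : Fin m) → Equiv.Perm (Fin (Nv j'))) := ⟨fun _ => 1⟩
      refine abs_pavg_sub_pavg_le _ _ _ ?_
      intro y
      rw [mix_update, mix_update]
      exact hf j (mix Nv (j : ℕ) x y) σ τ
    have htail := perm_tail (L j) s (hL j) hs φ hφlip
    have hIφ : ∀ τ : Equiv.Perm (Fin (Nv j)),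
        I (Function.update x j τ) = if s ≤ |φ τ - pavg φ| then 1 else 0 := by
      intro τ
      rw [hI]
      simp only
      rw [hmean τ]
    calc ∑ τ : Equiv.Perm (Fin (Nv j)), I (Function.update x j τ)
        = ∑ τ : Equiv.Perm (Fin (Nv j)), if s ≤ |φ τ - pavg φ| then (1:ℝ) else 0 := by
          exact Finset.sum_congr rfl fun τ _ => hIφ τ
      _ = ((Finset.univ.filter fun τ : Equiv.Perm (Fin (Nv j)) =>
            s ≤ |φ τ - pavg φ|).card : ℝ) := by rw [Finset.sum_boole]
      _ ≤ B * cPj := htail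
  -- counting
  have hcount : ((Finset.univ.filter fun x : (j' : Fin m) → Equiv.Perm (Fin (Nv j')) =>
      s ≤ |gfun Nv f ((j : ℕ) + 1) x - gfun Nv f (j : ℕ) x|).card : ℝ) * cPj ≤ K * (B * cPj) := by
    calc ((Finset.univ.filter fun x : (j' : Fin m) → Equiv.Perm (Fin (Nv j')) =>
        s ≤ |gfun Nv f ((j : ℕ) + 1) x - gfun Nv f (j : ℕ) x|).card : ℝ) * cPj
        = (∑ x, I x) * cPj := by rw [hI, Finset.sum_boole]
      _ = ∑ x, ∑ _τ : Equiv.Perm (Fin (Nv j)), I x := by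
          rw [Finset.sum_mul]
          apply Finset.sum_congr rfl
          intro x _
          rw [Finset.sum_const, Finset.card_univ, nsmul_eq_mul, hcPj]
          ring
      _ = ∑ p : ((j' : Fin m) → Equiv.Perm (Fin (Nv j'))) × Equiv.Perm (Fin (Nv j)), I p.1 := by
          rw [Fintype.sum_prod_type]
      _ = ∑ p : ((j' : Fin m) → Equiv.Perm (Fin (Nv j'))) × Equiv.Perm (Fin (Nv j)),
            I (Function.update p.1 j p.2) := (sum_update_pair j I).symm
      _ = ∑ x, ∑ τ : Equiv.Perm (Fin (Nv j)), I (Function.update x j τ) := by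
          rw [Fintype.sum_prod_type]
      _ ≤ ∑ _x : ((j' : Fin m) → Equiv.Perm (Fin (Nv j'))), B * cPj :=
          Finset.sum_le_sum fun x _ => perx x
      _ = K * (B * cPj) := by
          rw [Finset.sum_const, Finset.card_univ, nsmul_eq_mul, hK]
  have := le_of_mul_le_mul_right (by linarith [hcount] :
    ((Finset.univ.filter fun x : (j' : Fin m) → Equiv.Perm (Fin (Nv j')) =>
        s ≤ |gfun Nv f ((j : ℕ) + 1) x - gfun Nv f (j : ℕ) x|).card : ℝ) * cPj ≤ (B * K) * cPj)
    hPjpos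
  linarith [this]

end ConcAux

open Finset in
/-- **Lemma (iterated concentration for several independent uniform permutations).** -/
theorem statement16 (m : ℕ) (Nv : Fin m → ℕ) (L : Fin m → ℝ) (hL : ∀ j, 0 < L j)
    (f : ((j : Fin m) → Equiv.Perm (Fin (Nv j))) → ℝ)
    (hf : ∀ (j : Fin m) (x : (j : Fin m) → Equiv.Perm (Fin (Nv j)))
        (σ τ : Equiv.Perm (Fin (Nv j))),
        |f (Function.update x j σ) - f (Function.update x j τ)| ≤ L j * dHamm σ τ)
    (ε : ℝ) (hε : 0 < ε) :
    ((Finset.univ.filter fun x : (j : Fin m) → Equiv.Perm (Fin (Nv j)) =>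
        ε ≤ |f x - (∑ y : (j : Fin m) → Equiv.Perm (Fin (Nv j)), f y) /
          (Fintype.card ((j : Fin m) → Equiv.Perm (Fin (Nv j))) : ℝ)|).card : ℝ) /
      (Fintype.card ((j : Fin m) → Equiv.Perm (Fin (Nv j))) : ℝ)
      ≤ 2 * ∑ j : Fin m,
          Real.exp (-(Nv j : ℝ) * ε ^ 2 / (64 * (m : ℝ) ^ 2 * L j ^ 2)) := by
  haveI : Nonempty ((j : Fin m) → Equiv.Perm (Fin (Nv j))) := ⟨fun _ => 1⟩
  have hKpos : (0:ℝ) < (Fintype.card ((j : Fin m) → Equiv.Perm (Fin (Nv j))) : ℝ) := by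
    exact_mod_cast Fintype.card_pos
  have hpavg : (∑ y : (j : Fin m) → Equiv.Perm (Fin (Nv j)), f y) /
      (Fintype.card ((j : Fin m) → Equiv.Perm (Fin (Nv j))) : ℝ) = pavg f := rfl
  rw [hpavg]
  rcases Nat.eq_zero_or_pos m with rfl | hm
  · -- m = 0
    have hcard1 : Fintype.card ((j : Fin 0) → Equiv.Perm (Fin (Nv j))) = 1 := by
      simp [Fintype.card_pi]
    obtain ⟨x0, hx0⟩ := Fintype.card_eq_one_iff.mp hcard1
    have hempt : (Finset.univ.filter fun x : (j : Fin 0) → Equiv.Perm (Fin (Nv j)) =>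
        ε ≤ |f x - pavg f|).card = 0 := by
      rw [Finset.card_eq_zero, Finset.filter_eq_empty_iff]
      intro x _
      have hxx : x = x0 := hx0 x
      have huniv : (Finset.univ : Finset ((j : Fin 0) → Equiv.Perm (Fin (Nv j)))) = {x0} := by
        apply Finset.eq_singleton_iff_unique_mem.mpr
        exact ⟨Finset.mem_univ _, fun y _ => hx0 y⟩
      have : pavg f = f x0 := by
        rw [pavg, hcard1, huniv]
        simp
      rw [this, hxx]
      simp
      linarith
    rw [hempt]
    simp
  · -- m ≥ 1
    have hmR : (0:ℝ) < (m : ℝ) := by exact_mod_cast hm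
    set s : ℝ := ε / m with hsdef
    have hs : 0 < s := by positivity
    set Fk : ℕ → Finset ((j : Fin m) → Equiv.Perm (Fin (Nv j))) := fun k =>
      Finset.univ.filter fun x => s ≤ |gfun Nv f (k + 1) x - gfun Nv f k x| with hFk
    have hsubset : (Finset.univ.filter fun x : (j : Fin m) → Equiv.Perm (Fin (Nv j)) =>
        ε ≤ |f x - pavg f|) ⊆ (Finset.range m).biUnion Fk := by
      intro x hx
      rw [Finset.mem_filter] at hx
      by_contra hcon
      have hlt : ∀ k ∈ Finset.range m, |gfun Nv f (k + 1) x - gfun Nv f k x| < s := by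
        intro k hk
        by_contra hge
        apply hcon
        refine Finset.mem_biUnion.mpr ⟨k, hk, ?_⟩
        rw [hFk]
        exact Finset.mem_filter.mpr ⟨Finset.mem_univ _, not_lt.mp hge⟩
      have htele : f x - pavg f
          = ∑ k ∈ Finset.range m, (gfun Nv f (k + 1) x - gfun Nv f k x) := by
        rw [Finset.sum_range_sub (fun k => gfun Nv f k x) m, gfun_top, gfun_zero]
      have habs : |f x - pavg f|
          ≤ ∑ k ∈ Finset.range m, |gfun Nv f (k + 1) x - gfun Nv f k x| := by
        rw [htele]
        exact Finset.abs_sum_le_sum_abs _ _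
      have hstrict : ∑ k ∈ Finset.range m, |gfun Nv f (k + 1) x - gfun Nv f k x|
          < ∑ _k ∈ Finset.range m, s :=
        Finset.sum_lt_sum_of_nonempty (Finset.nonempty_range_iff.mpr hm.ne') hlt
      rw [Finset.sum_const, Finset.card_range, nsmul_eq_mul, hsdef] at hstrict
      have : (m : ℝ) * (ε / m) = ε := by field_simp
      rw [this] at hstrict
      linarith [hx.2, habs, hstrict]
    set T : ℕ → ℝ := fun k =>
      if h : k < m then
        2 * Real.exp (-(Nv ⟨k, h⟩ : ℝ) * ε ^ 2 / (64 * (m : ℝ) ^ 2 * L ⟨k, h⟩ ^ 2))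
      else 0 with hT
    have hterm : ∀ k ∈ Finset.range m, ((Fk k).card : ℝ)
        ≤ T k * (Fintype.card ((j : Fin m) → Equiv.Perm (Fin (Nv j))) : ℝ) := by
      intro k hk
      have hkm : k < m := Finset.mem_range.mp hk
      have hco := coordbound L hL f hf ⟨k, hkm⟩ s hs
      refine hco.trans ?_
      rw [hT]
      simp only [dif_pos hkm]
      have hexple : -((Nv ⟨k, hkm⟩ : ℕ) : ℝ) * s ^ 2 / (18 * L ⟨k, hkm⟩ ^ 2)
          ≤ -((Nv ⟨k, hkm⟩ : ℕ) : ℝ) * ε ^ 2 / (64 * (m : ℝ) ^ 2 * L ⟨k, hkm⟩ ^ 2) := by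
        have hNn : (0:ℝ) ≤ ((Nv ⟨k, hkm⟩ : ℕ) : ℝ) := Nat.cast_nonneg _
        have hLp : 0 < L ⟨k, hkm⟩ := hL ⟨k, hkm⟩
        have he2 : (0:ℝ) ≤ ε ^ 2 := sq_nonneg _
        have hL2 : (0:ℝ) < L ⟨k, hkm⟩ ^ 2 := by positivity
        have hm2 : (0:ℝ) < (m:ℝ) ^ 2 := by positivity
        have hmne : (m:ℝ) ≠ 0 := ne_of_gt hmR
        have hLne : L ⟨k, hkm⟩ ≠ 0 := ne_of_gt hLp
        have hs2 : ε ^ 2 = s ^ 2 * (m:ℝ) ^ 2 := by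
          rw [hsdef]
          field_simp
        have hd1 : (0:ℝ) < 18 * L ⟨k, hkm⟩ ^ 2 := by positivity
        have hd2 : (0:ℝ) < 64 * (m:ℝ) ^ 2 * L ⟨k, hkm⟩ ^ 2 := by positivity
        rw [hs2, div_le_div_iff₀ hd1 hd2]
        nlinarith [mul_nonneg (mul_nonneg (mul_nonneg hNn (sq_nonneg s)) hm2.le) hL2.le]
      refine mul_le_mul_of_nonneg_right ?_ hKpos.le
      exact mul_le_mul_of_nonneg_left (Real.exp_le_exp.mpr hexple) (by norm_num)
    have hcardle : ((Finset.univ.filter fun x : (j : Fin m) → Equiv.Perm (Fin (Nv j)) =>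
        ε ≤ |f x - pavg f|).card : ℝ)
        ≤ (∑ k ∈ Finset.range m, T k) *
          (Fintype.card ((j : Fin m) → Equiv.Perm (Fin (Nv j))) : ℝ) := by
      have h1 := Finset.card_le_card hsubset
      have h2 := Finset.card_biUnion_le (s := Finset.range m) (t := Fk)
      have h3 : ((Finset.range m).biUnion Fk).card ≤ ∑ k ∈ Finset.range m, (Fk k).card := h2
      have h4 : ((Finset.univ.filter fun x : (j : Fin m) → Equiv.Perm (Fin (Nv j)) =>
          ε ≤ |f x - pavg f|).card : ℝ) ≤ (∑ k ∈ Finset.range m, (Fk k).card : ℕ) := by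
        exact_mod_cast h1.trans h3
      refine h4.trans ?_
      push_cast
      rw [Finset.sum_mul]
      exact Finset.sum_le_sum hterm
    rw [div_le_iff₀ hKpos]
    refine hcardle.trans_eq ?_
    congr 1
    have hTsum : ∑ k ∈ Finset.range m, T k
        = ∑ j : Fin m, T (j : ℕ) := (Fin.sum_univ_eq_sum_range T m).symm
    rw [hTsum, Finset.mul_sum]
    apply Finset.sum_congr rfl
    intro j _
    rw [hT]
    simp only [dif_pos j.isLt, Fin.eta]

end GraphPaper
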